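/- Let m, k_B, a, ε > 0 be constants. Let Θ, N, φ : ℝ³ → ℝ and u : ℝ³ → ℝ³ be differentiable fields with Θ(x) > 0 and 0 < N(x) < 1 for all x. Define ρ := m N a⁻³, β := 1/(k_B Θ), ζⁱ := −uⁱ/(k_B Θ), ξ := −m φ/(k_B Θ) − log N + log(1−N) + (3/2) log(2π m k_B Θ/ε²) + m|u|²/(2 k_B Θ), and fᵢ := −∂ᵢφ. Then for any differentiable pressure field Q : ℝ³ → ℝ, the entropy-production expression Σᵢ ζⁱ ρ fᵢ + Σⱼ (ρ uʲ/m) ∂ⱼξ + Σᵢⱼ (ρ uⁱ uʲ + δⁱʲ Q) ∂ⱼζⁱ + Σⱼ ρ uʲ (3 k_B Θ/(2m) + Q/ρ + |u|²/2 + φ) ∂ⱼβ + a⁻³ Σⱼ uʲ ∂ⱼN/(1−N) − a⁻³ log(1−N) Σⱼ ∂ⱼuʲ equals −(Q + k_B Θ a⁻³ log(1−N)) (Σⱼ ∂ⱼuʲ)/(k_B Θ) at every point. In particular, for the ideal-gas pressure Q = k_B Θ N a⁻³ = ρ k_B Θ/m, the entropy production equals −a⁻³ (N + log(1−N)) Σⱼ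 ∂ⱼuʲ, which is of second order in the density N. -/

import Mathlib

open Real

/-- The partial derivative in the `j`-th coordinate direction of a scalar field on `ℝ³`. -/
noncomputable def pd (j : Fin 3) (f : (Fin 3 → ℝ) → ℝ) (x : Fin 3 → ℝ) : ℝ :=
  fderiv ℝ f x (Pi.single j 1)


section pdLemmas

variable {f g : (Fin 3 → ℝ) → ℝ} {x : Fin 3 → ℝ} {j : Fin 3}

lemma pd_const (c : ℝ) : pd j (fun _ => c) x = 0 := by simp [pd]

lemma pd_add (hf : DifferentiableAt ℝ f x) (hg : DifferentiableAt ℝ g x) :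
    pd j (fun y => f y + g y) x = pd j f x + pd j g x := by
  simp [pd, fderiv_fun_add hf hg]

lemma pd_sub (hf : DifferentiableAt ℝ f x) (hg : DifferentiableAt ℝ g x) :
    pd j (fun y => f y - g y) x = pd j f x - pd j g x := by
  simp [pd, fderiv_fun_sub hf hg]

lemma pd_mul (hf : DifferentiableAt ℝ f x) (hg : DifferentiableAt ℝ g x) :
    pd j (fun y => f y * g y) x = f x * pd j g x + g x * pd j f x := by
  simp [pd, fderiv_fun_mul hf hg]

lemma pd_const_mul (hf : DifferentiableAt ℝ f x) (c : ℝ) :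
    pd j (fun y => c * f y) x = c * pd j f x := by
  simp [pd, fderiv_const_mul hf c]

lemma pd_neg (hf : DifferentiableAt ℝ f x) :
    pd j (fun y => -f y) x = -pd j f x := by
  simp [pd]

lemma pd_const_sub (hf : DifferentiableAt ℝ f x) (c : ℝ) :
    pd j (fun y => c - f y) x = -pd j f x := by
  have h : (fun y => c - f y) = fun y => (fun _ => c) y - f y := rfl
  rw [h, pd_sub (differentiableAt_const c) hf, pd_const]
  ring

lemma pd_log (hf : DifferentiableAt ℝ f x) (h : f x ≠ 0) :
    pd j (fun y => Real.log (f y)) x = pd j f x / f x := by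
  have h2 := (hf.hasFDerivAt.log h).fderiv
  simp [pd, h2, div_eq_inv_mul]

lemma pd_inv (hf : DifferentiableAt ℝ f x) (h : f x ≠ 0) :
    pd j (fun y => (f y)⁻¹) x = -pd j f x / f x ^ 2 := by
  have h2 := ((hasDerivAt_inv h).comp_hasFDerivAt x hf.hasFDerivAt).fderiv
  simp only [Function.comp_def] at h2
  simp [pd, h2, div_eq_inv_mul]

lemma pd_div (hf : DifferentiableAt ℝ f x) (hg : DifferentiableAt ℝ g x) (h : g x ≠ 0) :
    pd j (fun y => f y / g y) x = (pd j f x * g x - f x * pd j g x) / g x ^ 2 := by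
  have h2 : (fun y => f y / g y) = fun y => f y * (g y)⁻¹ := by
    funext y; rw [div_eq_mul_inv]
  rw [h2, pd_mul hf (hg.fun_inv h), pd_inv hg h]
  field_simp
  ring

lemma pd_one_div (hg : DifferentiableAt ℝ g x) (h : g x ≠ 0) :
    pd j (fun y => 1 / g y) x = -pd j g x / g x ^ 2 := by
  have h2 : (fun y => 1 / g y) = fun y => (g y)⁻¹ := by funext y; rw [one_div]
  rw [h2, pd_inv hg h]

lemma pd_div_const (hf : DifferentiableAt ℝ f x) (c : ℝ) :
    pd j (fun y => f y / c) x = pd j f x / c := by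
  have h2 : (fun y => f y / c) = fun y => c⁻¹ * f y := by funext y; rw [div_eq_inv_mul]
  rw [h2, pd_const_mul hf c⁻¹, div_eq_inv_mul]

lemma pd_sq (hf : DifferentiableAt ℝ f x) :
    pd j (fun y => f y ^ 2) x = 2 * (f x * pd j f x) := by
  have h2 : (fun y => f y ^ 2) = fun y => f y * f y := by funext y; ring
  rw [h2, pd_mul hf hf]; ring

lemma differentiableAt_div3 (hf : DifferentiableAt ℝ f x) (hg : DifferentiableAt ℝ g x)
    (h : g x ≠ 0) : DifferentiableAt ℝ (fun y => f y / g y) x := by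
  simp only [div_eq_mul_inv]; exact hf.mul (hg.inv h)

lemma differentiableAt_div_const3 (hf : DifferentiableAt ℝ f x) (c : ℝ) :
    DifferentiableAt ℝ (fun y => f y / c) x := by
  simp only [div_eq_mul_inv]; exact hf.mul_const c⁻¹

lemma pd_sum3 {A : Fin 3 → (Fin 3 → ℝ) → ℝ} (h : ∀ i, DifferentiableAt ℝ (A i) x) :
    pd j (fun y => ∑ i, A i y) x = ∑ i, pd j (A i) x := by
  simp [pd, fderiv_fun_sum (fun i _ => h i)]

end pdLemmas

/-- The entropy-production expression of the hard-sphere lattice gas in local thermodynamic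
equilibrium, with an arbitrary pressure field `Q`. -/
noncomputable def entropyProduction (m kB a : ℝ)
    (Θ N φ Q ρ β ξ : (Fin 3 → ℝ) → ℝ) (u ζ f : (Fin 3 → ℝ) → Fin 3 → ℝ)
    (x : Fin 3 → ℝ) : ℝ :=
  (∑ i, ζ x i * ρ x * f x i)
  + (∑ j, (ρ x * u x j / m) * pd j ξ x)
  + (∑ i, ∑ j, (ρ x * u x i * u x j + (if i = j then Q x else 0))
      * pd j (fun y => ζ y i) x)
  + (∑ j, ρ x * u x j
      * (3 * kB * Θ x / (2 * m) + Q x / ρ x + (∑ i, u x i ^ 2) / 2 + φ x)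
      * pd j β x)
  + (a ^ 3)⁻¹ * (∑ j, u x j * pd j N x / (1 - N x))
  - (a ^ 3)⁻¹ * Real.log (1 - N x) * (∑ j, pd j (fun y => u y j) x)

set_option maxHeartbeats 4000000 in
/-- **Entropy production with a general pressure field.**
For any differentiable pressure field `Q`, the entropy production equals
`-(Q + k_B Θ a⁻³ log (1 - N)) · (div u) / (k_B Θ)`; in particular for the ideal-gas
pressure `Q = k_B Θ N a⁻³` it equals `-a⁻³ (N + log (1 - N)) · div u`, of second order
in the density `N`. -/
theorem entropy_production_general_pressure
    (m kB a ε : ℝ) (hm : 0 < m) (hkB : 0 < kB) (ha : 0 < a) (hε : 0 < ε)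
    (Θ N φ : (Fin 3 → ℝ) → ℝ) (u : (Fin 3 → ℝ) → Fin 3 → ℝ)
    (hΘ : Differentiable ℝ Θ) (hN : Differentiable ℝ N) (hφ : Differentiable ℝ φ)
    (hu : ∀ i, Differentiable ℝ (fun x => u x i))
    (hΘpos : ∀ x, 0 < Θ x) (hN0 : ∀ x, 0 < N x) (hN1 : ∀ x, N x < 1)
    (ρ β ξ : (Fin 3 → ℝ) → ℝ) (ζ f : (Fin 3 → ℝ) → Fin 3 → ℝ)
    (hρ : ρ = fun x => m * N x / a ^ 3)
    (hβ : β = fun x => 1 / (kB * Θ x))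
    (hζ : ζ = fun x i => -(u x i) / (kB * Θ x))
    (hξ : ξ = fun x => -(m * φ x) / (kB * Θ x) - Real.log (N x) + Real.log (1 - N x)
      + (3 / 2) * Real.log (2 * π * m * kB * Θ x / ε ^ 2)
      + m * (∑ i, u x i ^ 2) / (2 * kB * Θ x))
    (hf : f = fun x i => -(pd i φ x)) :
    (∀ Q : (Fin 3 → ℝ) → ℝ, Differentiable ℝ Q → ∀ x,
      entropyProduction m kB a Θ N φ Q ρ β ξ u ζ f x
        = -(Q x + kB * Θ x / a ^ 3 * Real.log (1 - N x))
            * (∑ j, pd j (fun y => u y j) x) / (kB * Θ x)) ∧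
    (∀ x, entropyProduction m kB a Θ N φ (fun y => kB * Θ y * N y / a ^ 3) ρ β ξ u ζ f x
        = -(a ^ 3)⁻¹ * (N x + Real.log (1 - N x)) * (∑ j, pd j (fun y => u y j) x)) := by
  subst hρ hβ hζ hξ hf
  have key : ∀ Q : (Fin 3 → ℝ) → ℝ, ∀ x,
      entropyProduction m kB a Θ N φ Q (fun x => m * N x / a ^ 3)
        (fun x => 1 / (kB * Θ x))
        (fun x => -(m * φ x) / (kB * Θ x) - Real.log (N x) + Real.log (1 - N x)
          + (3 / 2) * Real.log (2 * π * m * kB * Θ x / ε ^ 2)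
          + m * (∑ i, u x i ^ 2) / (2 * kB * Θ x))
        u (fun x i => -(u x i) / (kB * Θ x)) (fun x i => -(pd i φ x)) x
      = -(Q x + kB * Θ x / a ^ 3 * Real.log (1 - N x))
          * (∑ j, pd j (fun y => u y j) x) / (kB * Θ x) := by
    intro Q x
    have hTpos : 0 < Θ x := hΘpos x
    have hTne : Θ x ≠ 0 := (hΘpos x).ne'
    have hkT : kB * Θ x ≠ 0 := by positivity
    have h2kT : 2 * kB * Θ x ≠ 0 := by positivity
    have hNne : N x ≠ 0 := (hN0 x).ne'
    have h1N : (1 : ℝ) - N x ≠ 0 := sub_ne_zero.mpr (hN1 x).ne'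
    have hargne : 2 * π * m * kB * Θ x / ε ^ 2 ≠ 0 := by
      have hπ := Real.pi_pos
      positivity
    have dΘ : DifferentiableAt ℝ Θ x := hΘ x
    have dN : DifferentiableAt ℝ N x := hN x
    have dφ : DifferentiableAt ℝ φ x := hφ x
    have du : ∀ i, DifferentiableAt ℝ (fun y => u y i) x := fun i => hu i x
    have dkT : DifferentiableAt ℝ (fun y => kB * Θ y) x := dΘ.const_mul kB
    have d1 : DifferentiableAt ℝ (fun y => -(m * φ y) / (kB * Θ y)) x :=
      differentiableAt_div3 ((dφ.const_mul m).neg) dkT hkT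
    have d2 : DifferentiableAt ℝ (fun y => Real.log (N y)) x := dN.log hNne
    have d3 : DifferentiableAt ℝ (fun y => Real.log (1 - N y)) x :=
      DifferentiableAt.log ((differentiableAt_const (1 : ℝ)).sub dN) h1N
    have darg : DifferentiableAt ℝ (fun y => 2 * π * m * kB * Θ y / ε ^ 2) x :=
      differentiableAt_div_const3 (dΘ.const_mul (2 * π * m * kB)) (ε ^ 2)
    have d4 : DifferentiableAt ℝ
        (fun y => (3 / 2 : ℝ) * Real.log (2 * π * m * kB * Θ y / ε ^ 2)) x :=
      (darg.log hargne).const_mul (3 / 2)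
    have dS : DifferentiableAt ℝ (fun y => ∑ i, u y i ^ 2) x :=
      DifferentiableAt.fun_sum (fun i _ => (du i).fun_pow 2)
    have d5 : DifferentiableAt ℝ (fun y => m * (∑ i, u y i ^ 2) / (2 * kB * Θ y)) x :=
      differentiableAt_div3 (dS.const_mul m) (dΘ.const_mul (2 * kB)) h2kT
    have d12 : DifferentiableAt ℝ
        (fun y => -(m * φ y) / (kB * Θ y) - Real.log (N y)) x := d1.sub d2
    have d123 : DifferentiableAt ℝ
        (fun y => -(m * φ y) / (kB * Θ y) - Real.log (N y) + Real.log (1 - N y)) x :=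
      d12.add d3
    have d1234 : DifferentiableAt ℝ
        (fun y => -(m * φ y) / (kB * Θ y) - Real.log (N y) + Real.log (1 - N y)
          + (3 / 2 : ℝ) * Real.log (2 * π * m * kB * Θ y / ε ^ 2)) x := d123.add d4
    have hsq : ∀ (j : Fin 3) (i : Fin 3),
        pd j (fun y => u y i ^ 2) x = 2 * (u x i * pd j (fun y => u y i) x) :=
      fun j i => pd_sq (du i)
    have hpdβ : ∀ j, pd j (fun y => 1 / (kB * Θ y)) x
        = -(kB * pd j Θ x) / (kB * Θ x) ^ 2 := by
      intro j
      rw [pd_one_div dkT hkT, pd_const_mul dΘ kB]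
    have hpdζ : ∀ i j, pd j (fun y => -(u y i) / (kB * Θ y)) x
        = (-(pd j (fun y => u y i) x) * (kB * Θ x) + u x i * (kB * pd j Θ x))
            / (kB * Θ x) ^ 2 := by
      intro i j
      rw [pd_div ((du i).fun_neg) dkT hkT, pd_neg (du i), pd_const_mul dΘ kB]
      ring
    have hpdξ : ∀ j, pd j (fun y => -(m * φ y) / (kB * Θ y) - Real.log (N y)
        + Real.log (1 - N y)
        + (3 / 2) * Real.log (2 * π * m * kB * Θ y / ε ^ 2)
        + m * (∑ i, u y i ^ 2) / (2 * kB * Θ y)) x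
        = -(m * pd j φ x) / (kB * Θ x) + m * φ x * pd j Θ x / (kB * Θ x ^ 2)
          - pd j N x / N x - pd j N x / (1 - N x)
          + (3 / 2) * (pd j Θ x / Θ x)
          + m * (∑ i, u x i * pd j (fun y => u y i) x) / (kB * Θ x)
          - m * (∑ i, u x i ^ 2) * pd j Θ x / (2 * kB * Θ x ^ 2) := by
      intro j
      rw [pd_add d1234 d5, pd_add d123 d4, pd_add d12 d3, pd_sub d1 d2,
        pd_div ((dφ.const_mul m).fun_neg) dkT hkT, pd_neg (dφ.const_mul m),
        pd_const_mul dφ m, pd_const_mul dΘ kB, pd_log dN hNne,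
        pd_log ((differentiableAt_const (1 : ℝ)).fun_sub dN) h1N, pd_const_sub dN 1,
        pd_const_mul (darg.log hargne) (3 / 2), pd_log darg hargne,
        pd_div_const (dΘ.const_mul (2 * π * m * kB)) (ε ^ 2),
        pd_const_mul dΘ (2 * π * m * kB),
        pd_div (dS.const_mul m) (dΘ.const_mul (2 * kB)) h2kT,
        pd_const_mul dS m, pd_const_mul dΘ (2 * kB), pd_sum3 (fun i => (du i).fun_pow 2)]
      simp only [hsq, ← Finset.mul_sum]
      have hπ : π ≠ 0 := Real.pi_ne_zero
      field_simp
      ring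
    simp only [entropyProduction]
    simp only [hpdβ, hpdζ, hpdξ]
    simp only [Fin.sum_univ_three, Fin.isValue, Fin.reduceEq, reduceIte]
    field_simp
    ring
  constructor
  · intro Q _ x
    exact key Q x
  · intro x
    rw [key (fun y => kB * Θ y * N y / a ^ 3) x]
    have hTpos : 0 < Θ x := hΘpos x
    have hkT : kB * Θ x ≠ 0 := by positivity
    have ha3 : (a : ℝ) ^ 3 ≠ 0 := by positivity
    field_simp
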